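/- Let e = (1/√χ)·E₁₁ with χ = 8(n+1). Write elements of m_⊥ as block matrices (a_⊥, 𝐚_⊥) = [[a_⊥, 𝐚_⊥],[𝐚_⊥^t, 0]] with a_⊥ ∈ iℝ, 𝐚_⊥ ∈ ℂ^{n-1}, and elements of h_⊥ as (c_⊥, 𝐜_⊥) = [[c_⊥, 𝐜_⊥],[-conj(𝐜_⊥)^t, 0]] with c_⊥ ∈ iℝ, 𝐜_⊥ ∈ ℂ^{n-1}. Then ad(e)(a_⊥, 𝐚_⊥) = (1/√χ)(2a_⊥, -conj(𝐚_⊥)) ∈ h_⊥ and ad(e)(c_⊥, 𝐜_⊥) = (1/√χ)(-2c_⊥, conj(𝐜_⊥)) ∈ m_⊥; in particular ad(e) restricts to a linear isomorphism between m_⊥ and h_⊥. -/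

import Mathlib

open Matrix

/-- element `(a_⊥, 𝐚_⊥) = [[a_⊥, 𝐚_⊥],[𝐚_⊥ᵀ, 0]]` of `m_⊥` (for `a_⊥ ∈ iℝ`) -/
def Mperp {m : ℕ} (a : ℂ) (v : Fin m → ℂ) :
    Matrix (Fin 1 ⊕ Fin m) (Fin 1 ⊕ Fin m) ℂ :=
  Matrix.fromBlocks (Matrix.of fun _ _ => a) (Matrix.of fun _ j => v j)
    (Matrix.of fun i _ => v i) 0

/-- element `(c_⊥, 𝐜_⊥) = [[c_⊥, 𝐜_⊥],[-conj(𝐜_⊥)ᵀ, 0]]` of `h_⊥` (for `c_⊥ ∈ iℝ`) -/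
def Hperp {m : ℕ} (c : ℂ) (w : Fin m → ℂ) :
    Matrix (Fin 1 ⊕ Fin m) (Fin 1 ⊕ Fin m) ℂ :=
  Matrix.fromBlocks (Matrix.of fun _ _ => c) (Matrix.of fun _ j => w j)
    (Matrix.of fun i _ => -(star (w i))) 0

/-- the regular element `e = (1/√χ)·E₁₁` -/
noncomputable def eMat (m : ℕ) (χ : ℝ) : Matrix (Fin 1 ⊕ Fin m) (Fin 1 ⊕ Fin m) ℂ :=
  (Real.sqrt χ)⁻¹ • Matrix.fromBlocks 1 0 0 0

/-- `ad(e)` on `m`: `A ↦ [e, A] = A·conj(e) - e·conj(A)` (with `conj e = e`) -/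
noncomputable def adE_m (m : ℕ) (χ : ℝ) (A : Matrix (Fin 1 ⊕ Fin m) (Fin 1 ⊕ Fin m) ℂ) :
    Matrix (Fin 1 ⊕ Fin m) (Fin 1 ⊕ Fin m) ℂ :=
  A * eMat m χ - eMat m χ * A.map star

/-- `ad(e)` on `h`: `C ↦ [e, C] = e·conj(C) - C·e` -/
noncomputable def adE_h (m : ℕ) (χ : ℝ) (C : Matrix (Fin 1 ⊕ Fin m) (Fin 1 ⊕ Fin m) ℂ) :
    Matrix (Fin 1 ⊕ Fin m) (Fin 1 ⊕ Fin m) ℂ :=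
  eMat m χ * C.map star - C * eMat m χ

lemma one_fin_one (i j : Fin 1) : (1 : Matrix (Fin 1) (Fin 1) ℂ) i j = 1 := by
  rw [Subsingleton.elim i j, Matrix.one_apply_eq]

open Matrix

lemma key1 (m : ℕ) (χ : ℝ) (a : ℝ) (v : Fin m → ℂ) :
    adE_m m χ (Mperp (Complex.I * (a : ℂ)) v)
      = (Real.sqrt χ)⁻¹ • Hperp (2 * (Complex.I * (a : ℂ))) (fun j => -(star (v j))) := by
  ext i j
  rcases i with i | i <;> rcases j with j | j <;>
    simp [adE_m, Mperp, Hperp, eMat, Matrix.mul_apply, Fintype.sum_sum_type,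
      Matrix.fromBlocks, Matrix.map_apply, Complex.star_def, Complex.conj_I,
      Complex.conj_ofReal, _root_.map_mul, one_fin_one] <;> ring

lemma key2 (m : ℕ) (χ : ℝ) (c : ℝ) (w : Fin m → ℂ) :
    adE_h m χ (Hperp (Complex.I * (c : ℂ)) w)
      = (Real.sqrt χ)⁻¹ • Mperp (-(2 * (Complex.I * (c : ℂ)))) (fun j => star (w j)) := by
  ext i j
  rcases i with i | i <;> rcases j with j | j <;>
    simp [adE_h, Mperp, Hperp, eMat, Matrix.mul_apply, Fintype.sum_sum_type,
      Matrix.fromBlocks, Matrix.map_apply, Complex.star_def, Complex.conj_I,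
      Complex.conj_ofReal, _root_.map_mul, one_fin_one] <;> ring

lemma smul_Hperp {m : ℕ} (r : ℝ) (c : ℂ) (w : Fin m → ℂ) :
    r • Hperp c w = Hperp ((r : ℂ) * c) (fun j => (r : ℂ) * w j) := by
  ext i j
  rcases i with i | i <;> rcases j with j | j <;>
    simp [Hperp, Matrix.fromBlocks, Complex.star_def, Complex.conj_ofReal,
      Complex.real_smul] <;> ring

lemma Hperp_inj {m : ℕ} {c c' : ℂ} {w w' : Fin m → ℂ}
    (h : Hperp c w = Hperp c' w') : c = c' ∧ w = w' := by
  constructor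
  · have := congrFun (congrFun h (Sum.inl 0)) (Sum.inl 0)
    simpa [Hperp] using this
  · funext j
    have := congrFun (congrFun h (Sum.inl 0)) (Sum.inr j)
    simpa [Hperp] using this

/-- With `n = m+1` and `χ = 8(n+1)`,
`ad(e)(a_⊥, 𝐚_⊥) = (1/√χ)(2a_⊥, -conj 𝐚_⊥) ∈ h_⊥` and
`ad(e)(c_⊥, 𝐜_⊥) = (1/√χ)(-2c_⊥, conj 𝐜_⊥) ∈ m_⊥`; in particular `ad(e)` restricts to
a linear isomorphism (a bijection) between `m_⊥` and `h_⊥`. -/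
theorem adE_perp_isomorphism (m : ℕ) (χ : ℝ) (hχ : χ = 8 * ((m : ℝ) + 1 + 1)) :
    (∀ (a : ℝ) (v : Fin m → ℂ),
      adE_m m χ (Mperp (Complex.I * (a : ℂ)) v)
        = (Real.sqrt χ)⁻¹ •
            Hperp (2 * (Complex.I * (a : ℂ))) (fun j => -(star (v j)))) ∧
    (∀ (c : ℝ) (w : Fin m → ℂ),
      adE_h m χ (Hperp (Complex.I * (c : ℂ)) w)
        = (Real.sqrt χ)⁻¹ •
            Mperp (-(2 * (Complex.I * (c : ℂ)))) (fun j => star (w j))) ∧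
    Set.BijOn (adE_m m χ)
      {X | ∃ (a : ℝ) (v : Fin m → ℂ), X = Mperp (Complex.I * (a : ℂ)) v}
      {Y | ∃ (c : ℝ) (w : Fin m → ℂ), Y = Hperp (Complex.I * (c : ℂ)) w} := by
  have hχpos : (0:ℝ) < χ := by rw [hχ]; positivity
  have hs : Real.sqrt χ ≠ 0 := ne_of_gt (Real.sqrt_pos.mpr hχpos)
  have hsC : ((Real.sqrt χ : ℝ) : ℂ) ≠ 0 := by exact_mod_cast hs
  refine ⟨key1 m χ, key2 m χ, ?_, ?_, ?_⟩
  · rintro X ⟨a, v, rfl⟩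
    refine ⟨2 * (Real.sqrt χ)⁻¹ * a, fun j => (((Real.sqrt χ)⁻¹ : ℝ) : ℂ) * -(star (v j)), ?_⟩
    rw [key1, smul_Hperp]
    congr 1
    push_cast
    ring
  · rintro X ⟨a1, v1, rfl⟩ X' ⟨a2, v2, rfl⟩ h
    rw [key1, key1, smul_Hperp, smul_Hperp] at h
    obtain ⟨hc, hw⟩ := Hperp_inj h
    have ha : a1 = a2 := by
      have : (a1 : ℂ) = a2 := by
        field_simp at hc
        simpa [Complex.I_ne_zero, hs] using hc
      exact_mod_cast this
    have hv : v1 = v2 := by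
      funext j
      have := congrFun hw j
      have h2 : -(star (v1 j)) = -(star (v2 j)) :=
        mul_left_cancel₀ (by simpa using inv_ne_zero hsC) this
      have := neg_injective h2
      exact star_injective this
    rw [ha, hv]
  · rintro Y ⟨c, w, rfl⟩
    refine ⟨Mperp (Complex.I * ((c * Real.sqrt χ / 2 : ℝ) : ℂ))
      (fun j => -((Real.sqrt χ : ℝ) : ℂ) * star (w j)), ⟨_, _, rfl⟩, ?_⟩
    rw [key1, smul_Hperp]
    have e1 : (((Real.sqrt χ)⁻¹ : ℝ) : ℂ) * (2 * (Complex.I * ((c * Real.sqrt χ / 2 : ℝ) : ℂ)))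
        = Complex.I * (c : ℂ) := by push_cast; field_simp
    have e2 : (fun j => (((Real.sqrt χ)⁻¹ : ℝ) : ℂ) *
        -(star (-((Real.sqrt χ : ℝ) : ℂ) * star (w j)))) = w := by
      funext j
      simp [Complex.star_def, Complex.conj_ofReal, _root_.map_mul]
      field_simp
    rw [e1, e2]
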